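/- (Divergence Borel–Cantelli / Chung–Erdős inequality) Let X be a compact set in ℝ^d and μ a finite Borel measure on X. Let (E_n) be a sequence of μ-measurable subsets of X with ∑_{n=1}^∞ μ(E_n) = ∞. Then μ(limsup_n E_n) ≥ limsup_{Q→∞} (∑_{n=1}^Q μ(E_n))² / (∑_{n,m=1}^Q μ(E_n ∩ E_m)). -/

import Mathlib

open MeasureTheory Metric Set

open ENNReal

lemma sum_union_le'' (s t : Finset ℕ) (f : ℕ → ℝ≥0∞) :
    ∑ x ∈ s ∪ t, f x ≤ ∑ x ∈ s, f x + ∑ x ∈ t, f x := by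
  rw [← Finset.sum_union_inter]; exact le_self_add

lemma chung_erdos_key {α : Type*} [MeasurableSpace α] (μ : Measure α)
    (E : ℕ → Set α) (hmeas : ∀ n, MeasurableSet (E n)) (s : Finset ℕ) :
    (∑ n ∈ s, μ (E n)) ^ 2 ≤
      μ (⋃ n ∈ s, E n) * ∑ n ∈ s, ∑ m ∈ s, μ (E n ∩ E m) := by
  classical
  set f : α → ℝ≥0∞ := fun x => ∑ n ∈ s, (E n).indicator (fun _ => (1:ℝ≥0∞)) x with hf
  set S : Set α := ⋃ n ∈ s, E n with hS
  have hSmeas : MeasurableSet S := MeasurableSet.biUnion s.countable_toSet fun n _ => hmeas n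
  have hfmeas : Measurable f := Finset.measurable_sum s fun n _ =>
    (measurable_const.indicator (hmeas n))
  have h1 : ∫⁻ x, f x ∂μ = ∑ n ∈ s, μ (E n) := by
    rw [hf, lintegral_finset_sum _ fun n _ => measurable_const.indicator (hmeas n)]
    refine Finset.sum_congr rfl fun n _ => ?_
    rw [lintegral_indicator_const (hmeas n), one_mul]
  have h2 : ∫⁻ x, f x ^ 2 ∂μ = ∑ n ∈ s, ∑ m ∈ s, μ (E n ∩ E m) := by
    have hpt : ∀ x, f x ^ 2 = ∑ n ∈ s, ∑ m ∈ s,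
        (E n ∩ E m).indicator (fun _ => (1:ℝ≥0∞)) x := by
      intro x
      rw [sq, hf, Finset.sum_mul_sum]
      refine Finset.sum_congr rfl fun n _ => Finset.sum_congr rfl fun m _ => ?_
      have := congrFun (inter_indicator_one (s := E n) (t := E m) (M₀ := ℝ≥0∞)) x
      exact this.symm
    simp_rw [hpt]
    rw [lintegral_finset_sum _ fun n _ => Finset.measurable_sum s fun m _ =>
      measurable_const.indicator ((hmeas n).inter (hmeas m))]
    refine Finset.sum_congr rfl fun n _ => ?_
    rw [lintegral_finset_sum _ fun m _ => measurable_const.indicator ((hmeas n).inter (hmeas m))]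
    refine Finset.sum_congr rfl fun m _ => ?_
    rw [lintegral_indicator_const ((hmeas n).inter (hmeas m)), one_mul]
  have hfS : ∀ x, f x = S.indicator (fun _ => (1:ℝ≥0∞)) x * f x := by
    intro x
    by_cases hx : x ∈ S
    · rw [indicator_of_mem hx]; simp
    · rw [indicator_of_notMem hx, zero_mul, hf]
      refine Finset.sum_eq_zero fun n hn => ?_
      exact indicator_of_notMem (fun hxE => hx (mem_biUnion hn hxE)) _
  have hconj : Real.HolderConjugate 2 2 := Real.HolderConjugate.two_two
  have hCS := ENNReal.lintegral_mul_le_Lp_mul_Lq μ hconj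
    (f := S.indicator (fun _ => (1:ℝ≥0∞))) (g := f)
    ((measurable_const.indicator hSmeas).aemeasurable) hfmeas.aemeasurable
  have hL : ∫⁻ x, (S.indicator (fun _ => (1:ℝ≥0∞)) * f) x ∂μ = ∑ n ∈ s, μ (E n) := by
    rw [← h1]; exact lintegral_congr fun x => (hfS x).symm
  have hind : ∫⁻ x, S.indicator (fun _ => (1:ℝ≥0∞)) x ^ (2:ℝ) ∂μ = μ S := by
    rw [← lintegral_indicator_one hSmeas]
    refine lintegral_congr fun x => ?_
    by_cases hx : x ∈ S
    · rw [indicator_of_mem hx, indicator_of_mem hx]; simp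
    · rw [indicator_of_notMem hx, indicator_of_notMem hx]
      rw [ENNReal.zero_rpow_of_pos (by norm_num)]
  have hIq : ∫⁻ x, f x ^ (2:ℝ) ∂μ = ∑ n ∈ s, ∑ m ∈ s, μ (E n ∩ E m) := by
    rw [← h2]
    refine lintegral_congr fun x => ?_
    rw [← ENNReal.rpow_natCast (f x) 2]; norm_num
  rw [hL, hind, hIq] at hCS
  calc (∑ n ∈ s, μ (E n)) ^ 2
      ≤ (μ S ^ (1/(2:ℝ)) * (∑ n ∈ s, ∑ m ∈ s, μ (E n ∩ E m)) ^ (1/(2:ℝ))) ^ 2 := by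
        gcongr
    _ = μ S * ∑ n ∈ s, ∑ m ∈ s, μ (E n ∩ E m) := by
        rw [← ENNReal.rpow_natCast _ 2, ENNReal.mul_rpow_of_nonneg _ _ (by norm_num),
          ← ENNReal.rpow_mul, ← ENNReal.rpow_mul]
        norm_num

/-- Chung–Erdős / divergence Borel–Cantelli: if `∑ μ(E_n) = ∞` then
`μ(limsup E_n) ≥ limsup_Q (∑_{n=1}^Q μ(E_n))² / ∑_{n,m=1}^Q μ(E_n ∩ E_m)`. -/
theorem stmt_2 (d : ℕ) (X : Set (EuclideanSpace ℝ (Fin d))) (hX : IsCompact X)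
    (μ : Measure (EuclideanSpace ℝ (Fin d))) [IsFiniteMeasure μ]
    (E : ℕ → Set (EuclideanSpace ℝ (Fin d))) (hE : ∀ n, E n ⊆ X)
    (hmeas : ∀ n, MeasurableSet (E n))
    (hdiv : ∑' n, μ (E n) = ⊤) :
    Filter.atTop.limsup (fun Q : ℕ =>
        (∑ n ∈ Finset.Icc 1 Q, μ (E n)) ^ 2 /
          ∑ n ∈ Finset.Icc 1 Q, ∑ m ∈ Finset.Icc 1 Q, μ (E n ∩ E m))
      ≤ μ (⋂ N : ℕ, ⋃ n : ℕ, ⋃ (_ : N ≤ n), E n) := by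
  classical
  set U : ℕ → Set (EuclideanSpace ℝ (Fin d)) :=
    fun N => ⋃ n : ℕ, ⋃ (_ : N ≤ n), E n with hU
  have hU_meas : ∀ N, MeasurableSet (U N) := fun N =>
    MeasurableSet.iUnion fun n => MeasurableSet.iUnion fun _ => hmeas n
  have hU_anti : Antitone U := fun i j hij =>
    iUnion₂_subset fun n hn => subset_iUnion₂ (s := fun n _ => E n) n (hij.trans hn)
  set a : ℕ → ℝ≥0∞ := fun Q =>
    (∑ n ∈ Finset.Icc 1 Q, μ (E n)) ^ 2 /
      ∑ n ∈ Finset.Icc 1 Q, ∑ m ∈ Finset.Icc 1 Q, μ (E n ∩ E m) with ha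
  have hmain : ∀ N : ℕ, Filter.atTop.limsup a ≤ μ (U (N + 1)) := by
    intro N
    set N' : ℕ := N + 1 with hN'
    set C : ℝ≥0∞ := ∑ n ∈ Finset.Icc 1 N', μ (E n) with hC
    have hCfin : C ≠ ⊤ := (ENNReal.sum_lt_top.mpr fun n _ => measure_lt_top μ (E n)).ne
    set T : ℕ → ℝ≥0∞ := fun Q => ∑ n ∈ Finset.Icc N' Q, μ (E n) with hT
    have hTfin : ∀ Q, T Q ≠ ⊤ := fun Q =>
      (ENNReal.sum_lt_top.mpr fun n _ => measure_lt_top μ (E n)).ne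
    -- T tends to ⊤
    have hTtop : Filter.Tendsto T Filter.atTop (nhds ⊤) := by
      rw [ENNReal.tendsto_nhds_top_iff_nnreal]
      intro x
      have hS := ENNReal.tendsto_nat_tsum (fun n => μ (E n))
      rw [hdiv, ENNReal.tendsto_nhds_top_iff_nnreal] at hS
      set C' : ℝ≥0∞ := ∑ n ∈ Finset.range N', μ (E n) with hC'
      have hC'fin : C' ≠ ⊤ := (ENNReal.sum_lt_top.mpr fun n _ => measure_lt_top μ (E n)).ne
      filter_upwards [hS (x + C'.toNNReal)] with Q hQ
      have hsub : Finset.range Q ⊆ Finset.range N' ∪ Finset.Icc N' Q := by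
        intro n hn
        simp only [Finset.mem_union, Finset.mem_range, Finset.mem_Icc] at *
        omega
      have hle : (∑ n ∈ Finset.range Q, μ (E n)) ≤ C' + T Q := by
        refine le_trans (Finset.sum_le_sum_of_subset hsub) ?_
        exact sum_union_le'' _ _ _
      have : (x : ℝ≥0∞) + C' < C' + T Q := by
        calc (x : ℝ≥0∞) + C' = ↑(x + C'.toNNReal) := by
              rw [ENNReal.coe_add, ENNReal.coe_toNNReal hC'fin]
          _ < ∑ n ∈ Finset.range Q, μ (E n) := hQ
          _ ≤ C' + T Q := hle
      rw [add_comm C' (T Q)] at this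
      exact lt_of_add_lt_add_right this
    -- eventual bound
    have hev : ∀ᶠ Q in Filter.atTop, a Q ≤ (1 + C / T Q) ^ 2 * μ (U N') := by
      filter_upwards [(ENNReal.tendsto_nhds_top_iff_nnreal.mp hTtop) 1] with Q hTQ
      have hTne : T Q ≠ 0 := by
        intro h; rw [h] at hTQ; exact absurd hTQ (by simp)
      set A : ℝ≥0∞ := ∑ n ∈ Finset.Icc 1 Q, μ (E n) with hA
      set D : ℝ≥0∞ := ∑ n ∈ Finset.Icc 1 Q, ∑ m ∈ Finset.Icc 1 Q, μ (E n ∩ E m) with hD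
      have hAle : A ≤ C + T Q := by
        have hsub : Finset.Icc 1 Q ⊆ Finset.Icc 1 N' ∪ Finset.Icc N' Q := by
          intro n hn
          simp only [Finset.mem_union, Finset.mem_Icc] at *
          omega
        exact le_trans (Finset.sum_le_sum_of_subset hsub) (sum_union_le'' _ _ _)
      have h1 : C + T Q ≤ (1 + C / T Q) * T Q := by
        rw [add_mul, one_mul, ENNReal.div_mul_cancel hTne (hTfin Q), add_comm]
      have hkey := chung_erdos_key μ E hmeas (Finset.Icc N' Q)
      have hUsub : μ (⋃ n ∈ Finset.Icc N' Q, E n) ≤ μ (U N') := by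
        refine measure_mono (iUnion₂_subset fun n hn => ?_)
        exact subset_iUnion₂ (s := fun n _ => E n) n (Finset.mem_Icc.mp hn).1
      have hDsub : (∑ n ∈ Finset.Icc N' Q, ∑ m ∈ Finset.Icc N' Q, μ (E n ∩ E m)) ≤ D := by
        have hsub : Finset.Icc N' Q ⊆ Finset.Icc 1 Q := by
          intro n hn; simp only [Finset.mem_Icc] at *; omega
        refine le_trans (Finset.sum_le_sum fun n _ => Finset.sum_le_sum_of_subset hsub) ?_
        exact Finset.sum_le_sum_of_subset hsub
      have hT2 : T Q ^ 2 ≤ μ (U N') * D :=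
        le_trans hkey (mul_le_mul' hUsub hDsub)
      have hA2 : A ^ 2 ≤ ((1 + C / T Q) ^ 2 * μ (U N')) * D := by
        calc A ^ 2 ≤ ((1 + C / T Q) * T Q) ^ 2 := by
              exact pow_le_pow_left' (le_trans hAle h1) 2
          _ = (1 + C / T Q) ^ 2 * T Q ^ 2 := by ring
          _ ≤ (1 + C / T Q) ^ 2 * (μ (U N') * D) := by gcongr
          _ = ((1 + C / T Q) ^ 2 * μ (U N')) * D := by ring
      exact ENNReal.div_le_of_le_mul hA2
    have hlim : Filter.Tendsto (fun Q => (1 + C / T Q) ^ 2 * μ (U N'))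
        Filter.atTop (nhds (μ (U N'))) := by
      have hinv : Filter.Tendsto (fun Q => (T Q)⁻¹) Filter.atTop (nhds 0) := by
        have := ENNReal.tendsto_inv_iff.mpr hTtop
        simpa using this
      have hdivT : Filter.Tendsto (fun Q => C / T Q) Filter.atTop (nhds 0) := by
        simp_rw [div_eq_mul_inv]
        have := ENNReal.Tendsto.const_mul hinv (Or.inr hCfin)
        simpa using this
      have h1p : Filter.Tendsto (fun Q => (1 + C / T Q) ^ 2) Filter.atTop (nhds 1) := by
        have := (hdivT.const_add 1)
        have h2 := ENNReal.Tendsto.pow (n := 2) this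
        simpa using h2
      have := ENNReal.Tendsto.mul_const (b := μ (U N')) h1p (Or.inl one_ne_zero)
      simpa using this
    calc Filter.atTop.limsup a
        ≤ Filter.atTop.limsup (fun Q => (1 + C / T Q) ^ 2 * μ (U N')) :=
          Filter.limsup_le_limsup hev
      _ = μ (U N') := hlim.limsup_eq
  have hIeq : (⋂ N : ℕ, U N) = ⋂ N : ℕ, U (N + 1) := by
    apply le_antisymm
    · exact le_iInf fun N => iInter_subset U (N + 1)
    · exact le_iInf fun N => iInter_subset (fun N => U (N + 1)) N |>.trans (hU_anti (by omega))
  have hmeq : μ (⋂ N : ℕ, U N) = ⨅ N : ℕ, μ (U (N + 1)) := by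
    rw [hIeq]
    exact Antitone.measure_iInter (fun i j hij => hU_anti (by omega))
      (fun N => (hU_meas (N + 1)).nullMeasurableSet) ⟨0, measure_ne_top μ _⟩
  calc Filter.atTop.limsup a ≤ ⨅ N : ℕ, μ (U (N + 1)) := le_iInf hmain
    _ = μ (⋂ N : ℕ, U N) := hmeq.symm
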